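/- Let T = (t_{ijkl}) be a 4th-order 3-dimensional symmetric tensor with t_iiii = t_iiij = 1 and t_iijj = -1 for all distinct i, j ∈ {1,2,3}, and mixed entries t₁₁₂₃, t₁₂₂₃, t₁₂₃₃ ∈ {-1, 0, 1}. Then T is strictly copositive (i.e., Tx⁴ > 0 for all nonzero x ∈ ℝ³₊) if and only if t₁₁₂₃ + t₁₂₂₃ + t₁₂₃₃ ≥ 0. -/

import Mathlib

theorem aux_hard' (x y z : ℝ) (hx : 0 ≤ x) (hy : 0 ≤ y) (hz : 0 ≤ z) :
    0 ≤ 4*(x^3*y + x^3*z + x*y^3 + y^3*z + x*z^3 + y*z^3)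
      - 6*(x^2*y^2 + x^2*z^2 + y^2*z^2) - 12*x^2*y*z + 12*x*y*z^2 := by
  nlinarith [mul_nonneg (mul_nonneg hx hy) (sq_nonneg (2*x + y - 3*z)),
    mul_nonneg (mul_nonneg hx hx) (sq_nonneg (y - 3*z)),
    mul_nonneg (mul_nonneg hx hy) (sq_nonneg (y - 3*z)),
    mul_nonneg (mul_nonneg hy hz) (sq_nonneg (y - 3*z)),
    mul_nonneg (mul_nonneg hx hy) (sq_nonneg (x - 2*y + z)),
    mul_nonneg (mul_nonneg hx hz) (sq_nonneg (x - 2*y + z)),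
    mul_nonneg (mul_nonneg hy hz) (sq_nonneg (x - 2*y + z)),
    mul_nonneg (mul_nonneg hy hz) (sq_nonneg (x - 3*y + 3*z)),
    mul_nonneg (mul_nonneg hy hz) (sq_nonneg (x + 3*y)),
    mul_nonneg (mul_nonneg hx hy) (sq_nonneg (3*x - 2*y - 3*z)),
    mul_nonneg (mul_nonneg hx hz) (sq_nonneg (3*x - 2*y - 3*z))]

theorem aux0' (x y z : ℝ) (hx : 0 ≤ x) (hy : 0 ≤ y) (hz : 0 ≤ z) :
    0 ≤ 4*(x^3*y + x^3*z + x*y^3 + y^3*z + x*z^3 + y*z^3)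
      - 6*(x^2*y^2 + x^2*z^2 + y^2*z^2) := by
  nlinarith [mul_nonneg (mul_nonneg hx hy) (sq_nonneg (x - y)),
    mul_nonneg (mul_nonneg hx hz) (sq_nonneg (x - z)),
    mul_nonneg (mul_nonneg hy hz) (sq_nonneg (y - z)),
    mul_nonneg (mul_nonneg hx hy) (mul_nonneg hx hy),
    mul_nonneg (mul_nonneg hx hz) (mul_nonneg hx hz),
    mul_nonneg (mul_nonneg hy hz) (mul_nonneg hy hz)]

theorem stmt_10 (a b c : ℝ)
    (ha : a = -1 ∨ a = 0 ∨ a = 1) (hb : b = -1 ∨ b = 0 ∨ b = 1)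
    (hc : c = -1 ∨ c = 0 ∨ c = 1) :
    (∀ x₁ x₂ x₃ : ℝ, 0 ≤ x₁ → 0 ≤ x₂ → 0 ≤ x₃ → ¬(x₁ = 0 ∧ x₂ = 0 ∧ x₃ = 0) →
      0 < x₁^4 + x₂^4 + x₃^4
          + 4*(x₁^3*x₂ + x₁^3*x₃ + x₁*x₂^3 + x₂^3*x₃ + x₁*x₃^3 + x₂*x₃^3)
          - 6*(x₁^2*x₂^2 + x₁^2*x₃^2 + x₂^2*x₃^2)
          + 12*(a*x₁^2*x₂*x₃ + b*x₁*x₂^2*x₃ + c*x₁*x₂*x₃^2)) ↔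
    0 ≤ a + b + c := by
  constructor
  · intro h
    by_contra hneg
    push_neg at hneg
    have H := h 1 1 1 (by norm_num) (by norm_num) (by norm_num) (by norm_num)
    rcases ha with rfl | rfl | rfl <;> rcases hb with rfl | rfl | rfl <;>
      rcases hc with rfl | rfl | rfl <;>
      linarith
  · intro hs x₁ x₂ x₃ h1 h2 h3 hne
    have h4 : 0 < x₁^4 + x₂^4 + x₃^4 := by
      have hne' : x₁ ≠ 0 ∨ x₂ ≠ 0 ∨ x₃ ≠ 0 := by tauto
      rcases hne' with h | h | h
      · have := pow_pos (lt_of_le_of_ne h1 (Ne.symm h)) 4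
        nlinarith [pow_nonneg h2 4, pow_nonneg h3 4]
      · have := pow_pos (lt_of_le_of_ne h2 (Ne.symm h)) 4
        nlinarith [pow_nonneg h1 4, pow_nonneg h3 4]
      · have := pow_pos (lt_of_le_of_ne h3 (Ne.symm h)) 4
        nlinarith [pow_nonneg h1 4, pow_nonneg h2 4]
    have p0 : (0:ℝ) ≤ x₁ * x₂ * x₃ := mul_nonneg (mul_nonneg h1 h2) h3
    have p1 : (0:ℝ) ≤ x₁ * x₂ * x₃ * x₁ := mul_nonneg p0 h1
    have p2 : (0:ℝ) ≤ x₁ * x₂ * x₃ * x₂ := mul_nonneg p0 h2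
    have p3 : (0:ℝ) ≤ x₁ * x₂ * x₃ * x₃ := mul_nonneg p0 h3
    have A0 := aux0' x₁ x₂ x₃ h1 h2 h3
    have H12 := aux_hard' x₁ x₃ x₂ h1 h3 h2  -- pattern (-1, 1, 0)
    have H13 := aux_hard' x₁ x₂ x₃ h1 h2 h3  -- pattern (-1, 0, 1)
    have H21 := aux_hard' x₂ x₃ x₁ h2 h3 h1  -- pattern (1, -1, 0)
    have H23 := aux_hard' x₂ x₁ x₃ h2 h1 h3  -- pattern (0, -1, 1)
    have H31 := aux_hard' x₃ x₂ x₁ h3 h2 h1  -- pattern (1, 0, -1)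
    have H32 := aux_hard' x₃ x₁ x₂ h3 h1 h2  -- pattern (0, 1, -1)
    rcases ha with rfl | rfl | rfl <;> rcases hb with rfl | rfl | rfl <;>
      rcases hc with rfl | rfl | rfl <;>
      first
        | linarith [h4, p1, p2, p3, A0, H12, H13, H21, H23, H31, H32]
        | norm_num at hs
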